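/- A normal ideal A of the pseudo MV-algebra M = Γ(G,u) is a summand-ideal of M if and only if M = A ⊕ A^⊥. -/

import Mathlib

variable {G : Type*} [Lattice G] [AddGroup G]
  [CovariantClass G G (· + ·) (· ≤ ·)]
  [CovariantClass G G (Function.swap (· + ·)) (· ≤ ·)]

/-- `u` is a strong unit of the lattice-ordered group `G`. -/
def IsStrongUnit (u : G) : Prop := 0 ≤ u ∧ ∀ x : G, ∃ n : ℕ, x ≤ n • u

/-- The operation `x ⊕ y := (x + y) ⊓ u` of the pseudo MV-algebra `Γ(G,u)`. -/
def oplus (u x y : G) : G := (x + y) ⊓ u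

/-- The operation `x ⊙ y := (x - u + y) ⊔ 0` of the pseudo MV-algebra `Γ(G,u)`. -/
def odot (u x y : G) : G := (x - u + y) ⊔ 0

/-- `n.x := x ⊕ ⋯ ⊕ x` (`n` summands), with `0.x = 0`. -/
def nOplus (u : G) : ℕ → G → G
  | 0, _ => 0
  | n + 1, x => oplus u (nOplus u n x) x

/-- `I` is an ideal of the pseudo MV-algebra with carrier `C ⊆ Γ(G,u)`:
a nonempty subset of `C`, downward closed within `C`, and closed under `⊕`. -/
def IsIdealIn (u : G) (C I : Set G) : Prop :=
  I ⊆ C ∧ I.Nonempty ∧ (∀ x ∈ I, ∀ y ∈ C, y ≤ x → y ∈ I) ∧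
    ∀ x ∈ I, ∀ y ∈ I, oplus u x y ∈ I

/-- `I` is a normal ideal: `x ⊕ I = I ⊕ x` for all `x ∈ C`. -/
def IsNormalIdealIn (u : G) (C I : Set G) : Prop :=
  IsIdealIn u C I ∧ ∀ x ∈ C, (fun i => oplus u x i) '' I = (fun i => oplus u i x) '' I

/-- `⟨X⟩_n`, the smallest normal ideal (of the carrier `C`) containing `X`. -/
def normalGenIn (u : G) (C X : Set G) : Set G :=
  ⋂₀ {I | IsNormalIdealIn u C I ∧ X ⊆ I}

/-- The polar `X^⊥ = {y ∈ C : y ∧ x = 0 for all x ∈ X}` computed in carrier `C`. -/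
def polarIn (C X : Set G) : Set G := {y ∈ C | ∀ x ∈ X, y ⊓ x = 0}

/-- `A ⊕ B := {a ⊕ b : a ∈ A, b ∈ B}`. -/
def setOplus (u : G) (A B : Set G) : Set G := Set.image2 (oplus u) A B

/-- `↓a` computed within the carrier `C`. -/
def dsetIn (C : Set G) (a : G) : Set G := {x ∈ C | x ≤ a}

/-- `I` is a summand-ideal of the carrier `C`: a normal ideal such that for
some normal ideal `J`, `I ∩ J = {0}` and `⟨I ∪ J⟩_n = C`. -/
def IsSummandIdealIn (u : G) (C I : Set G) : Prop :=
  IsNormalIdealIn u C I ∧ ∃ J, IsNormalIdealIn u C J ∧ I ∩ J = {0} ∧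
    normalGenIn u C (I ∪ J) = C

/-- `I` is a polar ideal of the carrier `C`: `I = I^⊥⊥`. -/
def IsPolarIdealIn (C I : Set G) : Prop := polarIn C (polarIn C I) = I

/-- `a` is a Boolean element of the carrier `C`: `a ∈ C` and `a ⊕ a = a`. -/
def IsBooleanIn (u : G) (C : Set G) (a : G) : Prop := a ∈ C ∧ oplus u a a = a

/-- The carrier `C` is strongly projectable: every polar ideal is a summand-ideal. -/
def IsStronglyProjectableIn (u : G) (C : Set G) : Prop :=
  ∀ I : Set G, IsPolarIdealIn C I → IsSummandIdealIn u C I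

/-- `N` is a subalgebra of `Γ(G,u)`: contains `0` and `u`, closed under `⊕`,
`x⁻ = u - x` and `x∼ = -x + u`. -/
def IsSubalg (u : G) (N : Set G) : Prop :=
  N ⊆ Set.Icc 0 u ∧ 0 ∈ N ∧ u ∈ N ∧
    (∀ x ∈ N, ∀ y ∈ N, oplus u x y ∈ N) ∧
    (∀ x ∈ N, u - x ∈ N) ∧ (∀ x ∈ N, -x + u ∈ N)

/-- `N` is a large subalgebra of `Γ(G,u)`: for every nonzero `y ∈ Γ(G,u)` there
are `n ∈ ℕ` and a nonzero `x ∈ N` with `x ≤ n.y`. -/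
def IsLargeSubalg (u : G) (N : Set G) : Prop :=
  IsSubalg u N ∧ ∀ y ∈ Set.Icc (0 : G) u, y ≠ 0 →
    ∃ n : ℕ, ∃ x ∈ N, x ≠ 0 ∧ x ≤ nOplus u n y


set_option linter.unusedSectionVars false
set_option linter.unusedVariables false
set_option maxHeartbeats 800000

section MyHelpers


lemma my_add_eq_sup_of_inf_eq_zero {a b : G} (h : a ⊓ b = 0) : a + b = b ⊔ a := by
  have h2 : a + b = a + (-(a ⊓ b)) + b := by rw [h, neg_zero, add_zero]
  rw [h2, neg_inf, add_sup, add_neg_cancel, sup_add, zero_add, neg_add_cancel_right]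

lemma my_add_comm_of_inf_eq_zero {a b : G} (h : a ⊓ b = 0) : a + b = b + a := by
  rw [my_add_eq_sup_of_inf_eq_zero h,
    my_add_eq_sup_of_inf_eq_zero (by rwa [inf_comm] at h), sup_comm]

lemma my_riesz {a b c : G} (ha : 0 ≤ a) (hb : 0 ≤ b) (hc : 0 ≤ c) :
    a ⊓ (b + c) ≤ a ⊓ b + a ⊓ c := by
  have h1 : a ⊓ (b + c) ≤ (a ⊓ b) + c := by
    rw [inf_add]
    exact le_inf (le_trans inf_le_left (le_add_of_nonneg_right hc)) inf_le_right
  have h2 : a ⊓ (b + c) ≤ (a ⊓ b) + a :=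
    le_trans inf_le_left (le_add_of_nonneg_left (le_inf ha hb))
  calc a ⊓ (b + c) ≤ ((a ⊓ b) + a) ⊓ ((a ⊓ b) + c) := le_inf h2 h1
    _ = (a ⊓ b) + (a ⊓ c) := (add_inf a c (a ⊓ b)).symm

lemma oplus_mem_Icc {u x y : G} (hu0 : 0 ≤ u) (hx : 0 ≤ x) (hy : 0 ≤ y) :
    oplus u x y ∈ Set.Icc (0:G) u :=
  ⟨le_inf (add_nonneg hx hy) hu0, inf_le_right⟩

lemma oplus_zero_right {u x : G} (hx : x ≤ u) : oplus u x 0 = x := by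
  simp [oplus, inf_eq_left.mpr hx]

lemma oplus_zero_left {u x : G} (hx : x ≤ u) : oplus u 0 x = x := by
  simp [oplus, inf_eq_left.mpr hx]

lemma oplus_inf_inf {u p q : G} (hu0 : 0 ≤ u) (hp : 0 ≤ p) (hq : 0 ≤ q) :
    oplus u (p ⊓ u) (q ⊓ u) = (p + q) ⊓ u := by
  unfold oplus
  have h1 : (p ⊓ u + q ⊓ u) ⊓ u = (p ⊓ u + q) ⊓ u := by
    rw [add_inf, inf_assoc]
    congr 1
    exact inf_eq_right.mpr (le_add_of_nonneg_left (le_inf hp hu0))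
  rw [h1, inf_add, inf_assoc, inf_eq_right.mpr (le_add_of_nonneg_right hq)]

lemma oplus_oplus_left {u x y z : G} (hz : 0 ≤ z) :
    oplus u (oplus u x y) z = (x + y + z) ⊓ u := by
  unfold oplus
  rw [inf_add, inf_assoc, inf_eq_right.mpr (le_add_of_nonneg_right hz)]

lemma oplus_oplus_right {u x y z : G} (hx : 0 ≤ x) :
    oplus u x (oplus u y z) = (x + y + z) ⊓ u := by
  unfold oplus
  rw [add_inf, inf_assoc, inf_eq_right.mpr (le_add_of_nonneg_left hx), add_assoc]

lemma my_oplus_assoc {u x y z : G} (hx : 0 ≤ x) (hz : 0 ≤ z) :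
    oplus u (oplus u x y) z = oplus u x (oplus u y z) := by
  rw [oplus_oplus_left hz, oplus_oplus_right hx]

lemma image_seg_left {u x b : G} (hx : x ∈ Set.Icc (0:G) u) (hb0 : 0 ≤ b) :
    (fun i => oplus u x i) '' {j ∈ Set.Icc (0:G) u | j ≤ b} = Set.Icc x ((x + b) ⊓ u) := by
  ext t
  simp only [Set.mem_image, Set.mem_sep_iff, Set.mem_Icc, oplus]
  constructor
  · rintro ⟨j, ⟨⟨hj0, hju⟩, hjb⟩, rfl⟩
    exact ⟨le_inf (le_add_of_nonneg_right hj0) hx.2,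
      inf_le_inf_right _ (add_le_add_right hjb x)⟩
  · rintro ⟨hxt, ht⟩
    have htu : t ≤ u := le_trans ht inf_le_right
    refine ⟨-x + t, ⟨⟨?_, ?_⟩, ?_⟩, ?_⟩
    · calc (0:G) = -x + x := (neg_add_cancel x).symm
        _ ≤ -x + t := add_le_add_right hxt _
    · calc -x + t ≤ -x + u := add_le_add_right htu _
        _ ≤ 0 + u := add_le_add_left (neg_nonpos.mpr hx.1) u
        _ = u := zero_add u
    · have h1 : t ≤ x + b := le_trans ht inf_le_left
      calc -x + t ≤ -x + (x + b) := add_le_add_right h1 _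
        _ = b := neg_add_cancel_left x b
    · rw [add_neg_cancel_left]
      exact inf_eq_left.mpr htu

lemma image_seg_right {u x b : G} (hx : x ∈ Set.Icc (0:G) u) (hb0 : 0 ≤ b) :
    (fun i => oplus u i x) '' {j ∈ Set.Icc (0:G) u | j ≤ b} = Set.Icc x ((b + x) ⊓ u) := by
  ext t
  simp only [Set.mem_image, Set.mem_sep_iff, Set.mem_Icc, oplus]
  constructor
  · rintro ⟨j, ⟨⟨hj0, hju⟩, hjb⟩, rfl⟩
    exact ⟨le_inf (le_add_of_nonneg_left hj0) hx.2,
      inf_le_inf_right _ (add_le_add_left hjb x)⟩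
  · rintro ⟨hxt, ht⟩
    have htu : t ≤ u := le_trans ht inf_le_right
    refine ⟨t - x, ⟨⟨?_, ?_⟩, ?_⟩, ?_⟩
    · exact sub_nonneg.mpr hxt
    · calc t - x ≤ u - x := sub_le_sub_right htu x
        _ ≤ u := sub_le_self u hx.1
    · exact sub_le_iff_le_add.mpr (le_trans ht inf_le_left)
    · rw [sub_add_cancel]
      exact inf_eq_left.mpr htu

lemma zero_mem_of_ideal {u : G} (hu0 : 0 ≤ u) {I : Set G}
    (hI : IsIdealIn u (Set.Icc (0:G) u) I) : 0 ∈ I := by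
  obtain ⟨x, hx⟩ := hI.2.1
  exact hI.2.2.1 x hx 0 ⟨le_refl 0, hu0⟩ (hI.1 hx).1

lemma polar_isIdeal {u : G} (hu0 : 0 ≤ u) {A : Set G} (hAC : A ⊆ Set.Icc (0:G) u) :
    IsIdealIn u (Set.Icc (0:G) u) (polarIn (Set.Icc (0:G) u) A) := by
  refine ⟨fun y hy => hy.1,
    ⟨0, ⟨⟨le_refl 0, hu0⟩, fun a ha => inf_eq_left.mpr (hAC ha).1⟩⟩, ?_, ?_⟩
  · intro x hx y hyC hle
    exact ⟨hyC, fun a ha => le_antisymm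
      (le_trans (inf_le_inf_right a hle) (hx.2 a ha).le)
      (le_inf hyC.1 (hAC ha).1)⟩
  · intro x hx y hy
    refine ⟨oplus_mem_Icc hu0 hx.1.1 hy.1.1, fun a ha => le_antisymm ?_
      (le_inf (oplus_mem_Icc hu0 hx.1.1 hy.1.1).1 (hAC ha).1)⟩
    calc oplus u x y ⊓ a ≤ (x + y) ⊓ a := inf_le_inf_right a inf_le_left
      _ = a ⊓ (x + y) := inf_comm _ _
      _ ≤ a ⊓ x + a ⊓ y := my_riesz (hAC ha).1 hx.1.1 hy.1.1
      _ = 0 := by rw [inf_comm a x, inf_comm a y, hx.2 a ha, hy.2 a ha, add_zero]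

lemma carrier_seg {u : G} (hu0 : 0 ≤ u) :
    {j ∈ Set.Icc (0:G) u | j ≤ u} = Set.Icc (0:G) u := by
  ext j
  simp only [Set.mem_sep_iff, Set.mem_Icc, Set.mem_setOf_eq]
  tauto

lemma isNormal_carrier {u : G} (hu0 : 0 ≤ u) :
    IsNormalIdealIn u (Set.Icc (0:G) u) (Set.Icc (0:G) u) := by
  refine ⟨⟨subset_rfl, ⟨0, ⟨le_refl 0, hu0⟩⟩, fun x hx y hy _ => hy,
    fun x hx y hy => oplus_mem_Icc hu0 hx.1 hy.1⟩, ?_⟩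
  intro x hx
  rw [← carrier_seg hu0, image_seg_left hx hu0, image_seg_right hx hu0,
    inf_eq_right.mpr (le_add_of_nonneg_left hx.1),
    inf_eq_right.mpr (le_add_of_nonneg_right hx.1)]

lemma decomp {u x a b : G} (hx : x ∈ Set.Icc (0:G) u) (ha : a ∈ Set.Icc (0:G) u)
    (hb : b ∈ Set.Icc (0:G) u) (hle : x ≤ oplus u a b) :
    ∃ a' b', a' ∈ Set.Icc (0:G) u ∧ b' ∈ Set.Icc (0:G) u ∧ a' ≤ a ∧ b' ≤ b ∧
      oplus u a' b' = x := by
  have h1 : x ≤ a + b := le_trans hle inf_le_left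
  have h3 : x ≤ x ⊓ a + x ⊓ b := by
    calc x = x ⊓ (a + b) := (inf_eq_left.mpr h1).symm
      _ ≤ x ⊓ a + x ⊓ b := my_riesz hx.1 ha.1 hb.1
  have hb' : (-(x ⊓ a) + x) ⊔ 0 ≤ x ⊓ b := by
    refine sup_le ?_ (le_inf hx.1 hb.1)
    calc -(x ⊓ a) + x ≤ -(x ⊓ a) + (x ⊓ a + x ⊓ b) := add_le_add_right h3 _
      _ = x ⊓ b := neg_add_cancel_left _ _
  refine ⟨x ⊓ a, (-(x ⊓ a) + x) ⊔ 0, ⟨le_inf hx.1 ha.1, le_trans inf_le_left hx.2⟩,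
    ⟨le_sup_right, le_trans hb' (le_trans inf_le_left hx.2)⟩,
    inf_le_right, le_trans hb' inf_le_right, ?_⟩
  show (x ⊓ a + ((-(x ⊓ a) + x) ⊔ 0)) ⊓ u = x
  rw [add_sup, add_neg_cancel_left, add_zero,
    sup_eq_left.mpr inf_le_left, inf_eq_left.mpr hx.2]

lemma setOplus_normalIdeal {u : G} (hu0 : 0 ≤ u) {A J : Set G}
    (hA : IsNormalIdealIn u (Set.Icc (0:G) u) A)
    (hJ : IsNormalIdealIn u (Set.Icc (0:G) u) J)
    (hdisj : ∀ a ∈ A, ∀ j ∈ J, a ⊓ j = 0) :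
    IsNormalIdealIn u (Set.Icc (0:G) u) (setOplus u A J) := by
  have hAC : A ⊆ Set.Icc (0:G) u := hA.1.1
  have hJC : J ⊆ Set.Icc (0:G) u := hJ.1.1
  have h0A : 0 ∈ A := zero_mem_of_ideal hu0 hA.1
  have h0J : 0 ∈ J := zero_mem_of_ideal hu0 hJ.1
  constructor
  · refine ⟨?_, ?_, ?_, ?_⟩
    · rintro t ⟨a, ha, j, hj, rfl⟩
      exact oplus_mem_Icc hu0 (hAC ha).1 (hJC hj).1
    · exact ⟨0, 0, h0A, 0, h0J, oplus_zero_right hu0⟩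
    · rintro x ⟨a, ha, j, hj, rfl⟩ y hyC hle
      obtain ⟨a', b', ha'C, hb'C, ha'a, hb'j, heq⟩ := decomp hyC (hAC ha) (hJC hj) hle
      exact ⟨a', hA.1.2.2.1 a ha a' ha'C ha'a, b', hJ.1.2.2.1 j hj b' hb'C hb'j, heq⟩
    · rintro x ⟨a, ha, j, hj, rfl⟩ y ⟨a', ha', j', hj', rfl⟩
      have hcomm : j + a' = a' + j :=
        (my_add_comm_of_inf_eq_zero (hdisj a' ha' j hj)).symm
      have e1 : oplus u (oplus u a j) (oplus u a' j') = (a + j + (a' + j')) ⊓ u :=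
        oplus_inf_inf hu0 (add_nonneg (hAC ha).1 (hJC hj).1)
          (add_nonneg (hAC ha').1 (hJC hj').1)
      have e2 : a + j + (a' + j') = a + a' + (j + j') := by
        have h : j + (a' + j') = a' + (j + j') := by
          rw [← add_assoc, hcomm, add_assoc]
        rw [add_assoc, h, ← add_assoc]
      have e3 : oplus u (oplus u a a') (oplus u j j') = (a + a' + (j + j')) ⊓ u :=
        oplus_inf_inf hu0 (add_nonneg (hAC ha).1 (hAC ha').1)
          (add_nonneg (hJC hj).1 (hJC hj').1)
      rw [e1, e2, ← e3]
      exact ⟨_, hA.1.2.2.2 a ha a' ha', _, hJ.1.2.2.2 j hj j' hj', rfl⟩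
  · intro x hx
    have hx0 : 0 ≤ x := hx.1
    ext t
    simp only [Set.mem_image]
    constructor
    · rintro ⟨s, ⟨a, ha, j, hj, rfl⟩, rfl⟩
      have hxa : oplus u x a ∈ (fun i => oplus u i x) '' A := by
        rw [← hA.2 x hx]; exact ⟨a, ha, rfl⟩
      obtain ⟨a₁, ha₁, hea⟩ := hxa
      have hxj : oplus u x j ∈ (fun i => oplus u i x) '' J := by
        rw [← hJ.2 x hx]; exact ⟨j, hj, rfl⟩
      obtain ⟨j₁, hj₁, hej⟩ := hxj
      refine ⟨oplus u a₁ j₁, ⟨a₁, ha₁, j₁, hj₁, rfl⟩, ?_⟩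
      simp only at hea hej
      calc oplus u (oplus u a₁ j₁) x = oplus u a₁ (oplus u j₁ x) :=
            my_oplus_assoc (hAC ha₁).1 hx0
        _ = oplus u a₁ (oplus u x j) := by rw [hej]
        _ = oplus u (oplus u a₁ x) j := (my_oplus_assoc (hAC ha₁).1 (hJC hj).1).symm
        _ = oplus u (oplus u x a) j := by rw [hea]
        _ = oplus u x (oplus u a j) := my_oplus_assoc hx0 (hJC hj).1
    · rintro ⟨s, ⟨a, ha, j, hj, rfl⟩, rfl⟩
      have hjx : oplus u j x ∈ (fun i => oplus u x i) '' J := by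
        rw [hJ.2 x hx]; exact ⟨j, hj, rfl⟩
      obtain ⟨j₁, hj₁, hej⟩ := hjx
      have hax : oplus u a x ∈ (fun i => oplus u x i) '' A := by
        rw [hA.2 x hx]; exact ⟨a, ha, rfl⟩
      obtain ⟨a₁, ha₁, hea⟩ := hax
      refine ⟨oplus u a₁ j₁, ⟨a₁, ha₁, j₁, hj₁, rfl⟩, ?_⟩
      simp only at hea hej
      calc oplus u x (oplus u a₁ j₁) = oplus u (oplus u x a₁) j₁ :=
            (my_oplus_assoc hx0 (hJC hj₁).1).symm
        _ = oplus u (oplus u a x) j₁ := by rw [hea]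
        _ = oplus u a (oplus u x j₁) := my_oplus_assoc (hAC ha).1 (hJC hj₁).1
        _ = oplus u a (oplus u j x) := by rw [hej]
        _ = oplus u (oplus u a j) x := (my_oplus_assoc (hAC ha).1 hx0).symm

end MyHelpers

theorem stmt3 (u : G) (hu : IsStrongUnit u) (A : Set G)
    (hA : IsNormalIdealIn u (Set.Icc (0 : G) u) A) :
    IsSummandIdealIn u (Set.Icc (0 : G) u) A ↔
      setOplus u A (polarIn (Set.Icc (0 : G) u) A) = Set.Icc (0 : G) u := by
  obtain ⟨hu0, -⟩ := hu
  have hAC : A ⊆ Set.Icc (0:G) u := hA.1.1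
  have h0A : 0 ∈ A := zero_mem_of_ideal hu0 hA.1
  constructor
  · rintro ⟨-, J, hJ, hAJ, hgen⟩
    have hJC : J ⊆ Set.Icc (0:G) u := hJ.1.1
    have hdisj : ∀ a ∈ A, ∀ j ∈ J, a ⊓ j = 0 := by
      intro a ha j hj
      have hC : a ⊓ j ∈ Set.Icc (0:G) u :=
        ⟨le_inf (hAC ha).1 (hJC hj).1, le_trans inf_le_left (hAC ha).2⟩
      have hmem : a ⊓ j ∈ A ∩ J :=
        ⟨hA.1.2.2.1 a ha _ hC inf_le_left, hJ.1.2.2.1 j hj _ hC inf_le_right⟩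
      rw [hAJ] at hmem
      simpa using hmem
    have hK := setOplus_normalIdeal hu0 hA hJ hdisj
    have h0J : 0 ∈ J := zero_mem_of_ideal hu0 hJ.1
    have hAK : A ⊆ setOplus u A J :=
      fun a ha => ⟨a, ha, 0, h0J, oplus_zero_right (hAC ha).2⟩
    have hJK : J ⊆ setOplus u A J :=
      fun j hj => ⟨0, h0A, j, hj, oplus_zero_left (hJC hj).2⟩
    have hCK : Set.Icc (0:G) u ⊆ setOplus u A J := by
      rw [← hgen]
      exact Set.sInter_subset_of_mem ⟨hK, Set.union_subset hAK hJK⟩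
    have hJP : J ⊆ polarIn (Set.Icc (0:G) u) A := by
      intro j hj
      exact ⟨hJC hj, fun a ha => by rw [inf_comm]; exact hdisj a ha j hj⟩
    apply Set.Subset.antisymm
    · rintro t ⟨a, ha, p, hp, rfl⟩
      exact oplus_mem_Icc hu0 (hAC ha).1 hp.1.1
    · exact hCK.trans (Set.image2_subset (Set.Subset.refl A) hJP)
  · intro hM
    have hPideal : IsIdealIn u (Set.Icc (0:G) u) (polarIn (Set.Icc (0:G) u) A) :=
      polar_isIdeal hu0 hAC
    set P := polarIn (Set.Icc (0:G) u) A with hPdef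
    have h0P : 0 ∈ P := zero_mem_of_ideal hu0 hPideal
    have huS : u ∈ setOplus u A P := by
      rw [hM]; exact ⟨hu0, le_refl u⟩
    obtain ⟨a₀, ha₀, b₀, hb₀, hab⟩ := huS
    have ha₀0 : 0 ≤ a₀ := (hAC ha₀).1
    have hb₀0 : 0 ≤ b₀ := hb₀.1.1
    have hdisj0 : a₀ ⊓ b₀ = 0 := by rw [inf_comm]; exact hb₀.2 a₀ ha₀
    have hsum : a₀ + b₀ = u := by
      apply le_antisymm
      · calc a₀ + b₀ = b₀ ⊔ a₀ := my_add_eq_sup_of_inf_eq_zero hdisj0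
          _ ≤ u := sup_le hb₀.1.2 (hAC ha₀).2
      · calc u = oplus u a₀ b₀ := hab.symm
          _ ≤ a₀ + b₀ := inf_le_left
    have hcomm0 : a₀ + b₀ = b₀ + a₀ := my_add_comm_of_inf_eq_zero hdisj0
    have hAbound : ∀ a ∈ A, a ≤ a₀ := by
      intro a ha
      calc a = a ⊓ (b₀ + a₀) := by
            rw [← hcomm0, hsum]; exact (inf_eq_left.mpr (hAC ha).2).symm
        _ ≤ a ⊓ b₀ + a ⊓ a₀ := my_riesz (hAC ha).1 hb₀0 ha₀0
        _ = 0 + a ⊓ a₀ := by rw [inf_comm a b₀, hb₀.2 a ha]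
        _ ≤ a₀ := by rw [zero_add]; exact inf_le_right
    have hPseg : P = {j ∈ Set.Icc (0:G) u | j ≤ b₀} := by
      ext j
      constructor
      · intro hj
        refine ⟨hj.1, ?_⟩
        calc j = j ⊓ (a₀ + b₀) := by
              rw [hsum]; exact (inf_eq_left.mpr hj.1.2).symm
          _ ≤ j ⊓ a₀ + j ⊓ b₀ := my_riesz hj.1.1 ha₀0 hb₀0
          _ = 0 + j ⊓ b₀ := by rw [hj.2 a₀ ha₀]
          _ ≤ b₀ := by rw [zero_add]; exact inf_le_right
      · rintro ⟨hjC, hjb⟩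
        refine ⟨hjC, fun a ha => le_antisymm ?_ (le_inf hjC.1 (hAC ha).1)⟩
        calc j ⊓ a ≤ b₀ ⊓ a₀ := inf_le_inf hjb (hAbound a ha)
          _ = 0 := by rw [inf_comm]; exact hdisj0
    have hPnormal : IsNormalIdealIn u (Set.Icc (0:G) u) P := by
      refine ⟨hPideal, ?_⟩
      intro x hx
      have hxa : (x ⊓ a₀) ⊓ b₀ = 0 :=
        le_antisymm (le_trans (inf_le_inf_right b₀ inf_le_right) hdisj0.le)
          (le_inf (le_inf hx.1 ha₀0) hb₀0)
      have hkey : (x + b₀) ⊓ u = (b₀ + x) ⊓ u := by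
        calc (x + b₀) ⊓ u = (x + b₀) ⊓ (a₀ + b₀) := by rw [hsum]
          _ = x ⊓ a₀ + b₀ := by rw [inf_add]
          _ = b₀ + x ⊓ a₀ := my_add_comm_of_inf_eq_zero hxa
          _ = (b₀ + x) ⊓ (b₀ + a₀) := add_inf x a₀ b₀
          _ = (b₀ + x) ⊓ u := by rw [← hcomm0, hsum]
      rw [hPseg, image_seg_left hx hb₀0, image_seg_right hx hb₀0, hkey]
    refine ⟨hA, P, hPnormal, ?_, ?_⟩
    · apply Set.Subset.antisymm
      · rintro x ⟨hxA, hxP⟩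
        have h := hxP.2 x hxA
        rw [inf_idem] at h
        simpa using h
      · rintro x hx
        simp only [Set.mem_singleton_iff] at hx
        subst hx
        exact ⟨h0A, h0P⟩
    · apply Set.Subset.antisymm
      · exact Set.sInter_subset_of_mem ⟨isNormal_carrier hu0, Set.union_subset hAC hPideal.1⟩
      · intro x hx
        refine Set.mem_sInter.mpr fun I hI => ?_
        obtain ⟨hInorm, hsub⟩ := hI
        have hxS : x ∈ setOplus u A P := by rw [hM]; exact hx
        obtain ⟨a, ha, p, hp, rfl⟩ := hxS
        exact hInorm.1.2.2.2 a (hsub (Or.inl ha)) p (hsub (Or.inr hp))
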